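/- Let G be any n-lift of a d-regular graph H on vertex set [h]. Then for every induced subgraph G′ of G with |V(G′)| ≤ n − h√n, one has λ*(G) ≥ λ(G′) − 7/2, where λ(G′) is the largest eigenvalue of the adjacency matrix of G′. -/

import Mathlib

open scoped BigOperators
open scoped Classical

namespace RandomLifts

noncomputable section

/-- Probability of an event under the uniform measure on a finite type. -/
def unifProb {Ω : Type*} [Fintype Ω] (p : Ω → Prop) : ℝ :=
  letI := Classical.decPred p
  ((Finset.univ.filter p).card : ℝ) / (Fintype.card Ω : ℝ)

/-- The sample space of a random `n`-lift of a graph on `Fin h`: an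
independent, uniformly random permutation for each (ordered) pair of fibres
(only the permutations attached to pairs `i < i'` with `i ~ i'` are used). -/
abbrev LiftSpace (h n : ℕ) := Fin h → Fin h → Equiv.Perm (Fin n)

/-- The `n`-lift of `H` determined by the matchings `ω`. -/
def liftGraph {h n : ℕ} (H : SimpleGraph (Fin h)) (ω : LiftSpace h n) :
    SimpleGraph (Fin h × Fin n) where
  Adj u v := H.Adj u.1 v.1 ∧
    ((u.1 < v.1 ∧ v.2 = ω u.1 v.1 u.2) ∨ (v.1 < u.1 ∧ u.2 = ω v.1 u.1 v.2))
  symm := by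
    constructor
    intro u v huv
    exact ⟨huv.1.symm, huv.2.symm⟩
  loopless := by
    constructor
    intro u hu
    exact H.ne_of_adj hu.1 rfl

/-- The adjacency matrix of a graph, with real entries. -/
def adjMat {V : Type*} (G : SimpleGraph V) : Matrix V V ℝ :=
  fun u v => if G.Adj u v then 1 else 0

/-- The largest eigenvalue of (the adjacency matrix of) a graph on a finite
vertex set. -/
def lambdaMax {V : Type*} [Fintype V] (G : SimpleGraph V) : ℝ :=
  sSup {μ : ℝ | ∃ x : V → ℝ, x ≠ 0 ∧ (adjMat G).mulVec x = μ • x}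

/-- `λ*(G)`: the largest absolute value of a *new* eigenvalue of a lift,
i.e. of an eigenvalue admitting an eigenvector balanced on every fibre. -/
def lambdaStar {h n : ℕ} (G : SimpleGraph (Fin h × Fin n)) : ℝ :=
  sSup {r : ℝ | ∃ (μ : ℝ) (x : Fin h × Fin n → ℝ), x ≠ 0 ∧
    (adjMat G).mulVec x = μ • x ∧ (∀ i : Fin h, ∑ j : Fin n, x (i, j) = 0) ∧ r = |μ|}

/-- The matrix `M̄` of edge probabilities. -/
def Mbar (h n : ℕ) (H : SimpleGraph (Fin h)) :
    Matrix (Fin h × Fin n) (Fin h × Fin n) ℝ :=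
  fun u v => if H.Adj u.1 v.1 then 1 / (n : ℝ) else 0

/-- `N = M − M̄`. -/
def Nmat {h n : ℕ} (H : SimpleGraph (Fin h)) (G : SimpleGraph (Fin h × Fin n)) :
    Matrix (Fin h × Fin n) (Fin h × Fin n) ℝ :=
  adjMat G - Mbar h n H

/-- `⟨x,x⟩_A`. -/
def quadForm {V : Type*} [Fintype V] (A : Matrix V V ℝ) (x : V → ℝ) : ℝ :=
  ∑ u, ∑ v, x u * A u v * x v

/-- `⟨x,x⟩_{A,E}`: the quadratic form restricted to pairs of entries lying in
`E ⊆ ℝ²`. -/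
def quadFormOn {V : Type*} [Fintype V] (A : Matrix V V ℝ) (E : Set (ℝ × ℝ))
    (x : V → ℝ) : ℝ :=
  ∑ u, ∑ v, if (x u, x v) ∈ E then x u * A u v * x v else 0

/-- The set `E* = {(x₁,x₂) : x₁,x₂ > 0, d^{-1/2} < x₁/x₂ < d^{1/2}}`. -/
def Estar (d : ℕ) : Set (ℝ × ℝ) :=
  {p | 0 < p.1 ∧ 0 < p.2 ∧ (Real.sqrt d)⁻¹ < p.1 / p.2 ∧ p.1 / p.2 < Real.sqrt d}

/-- `D^{>0} = {2^i/√(nh) : i ≥ 1}`. -/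
def Dpos (n h : ℕ) : Set ℝ := {w | ∃ i : ℕ, 1 ≤ i ∧ w = 2 ^ i / Real.sqrt (n * h)}

/-- `D⁺ = {0} ∪ D^{>0}`. -/
def Dplus (n h : ℕ) : Set ℝ := insert 0 (Dpos n h)

/-- Membership in the set `Z` of dyadic test vectors. -/
def memZ (d h n : ℕ) (x : Fin h × Fin n → ℝ) : Prop :=
  (∑ v, x v ^ 2) ≤ 10 ∧ (∀ v, x v ∈ Dplus n h) ∧
    ∀ u v, x v ≠ 0 → x u ≤ (d : ℝ) * x v

/-- A `Z`-type. -/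
def IsZType (d h n : ℕ) (a : Fin h → ℝ → ℕ) : Prop :=
  (∀ i w, a i w ≠ 0 → w ∈ Dplus n h) ∧
  (∀ i, (∑ᶠ w : ℝ, a i w) ≤ n) ∧
  (∃ w₀ ∈ Dpos n h, ∀ i w, a i w ≠ 0 → w₀ ≤ w ∧ w ≤ w₀ * d) ∧
  ((∑ i : Fin h, ∑ᶠ w : ℝ, w ^ 2 * (a i w : ℝ)) ≤ 10)

/-- A pattern `(a,e)`. -/
def IsPattern (d h n : ℕ) (H : SimpleGraph (Fin h)) (a : Fin h → ℝ → ℕ)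
    (e : Fin h → ℝ → Fin h → ℝ → ℕ) : Prop :=
  IsZType d h n a ∧
  (∀ i w i' w', e i w i' w' = e i' w' i w) ∧
  (∀ i w i' w', e i w i' w' ≤ min (a i w) (a i' w')) ∧
  (∀ i w i' w', ¬H.Adj i i' → e i w i' w' = 0)

/-- The adjacency relation of the graph `Γ`. -/
def gammaAdj (d h n : ℕ) (H : SimpleGraph (Fin h)) (p q : Fin h × ℝ) : Prop :=
  H.Adj p.1 q.1 ∧ p.2 ∈ Dpos n h ∧ q.2 ∈ Dpos n h ∧
    (Real.sqrt d)⁻¹ < p.2 / q.2 ∧ p.2 / q.2 < Real.sqrt d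

/-- The summand `w w' (e_{i,w,i',w'} − a_{i,w}a_{i',w'}/n)` appearing in the
potency, for an ordered pair of `Γ`-adjacent vertices. -/
def potTerm (d h n : ℕ) (H : SimpleGraph (Fin h)) (a : Fin h → ℝ → ℕ)
    (e : Fin h → ℝ → Fin h → ℝ → ℕ) (p q : Fin h × ℝ) : ℝ :=
  if gammaAdj d h n H p q then
    p.2 * q.2 * ((e p.1 p.2 q.1 q.2 : ℝ) - (a p.1 p.2 : ℝ) * (a q.1 q.2 : ℝ) / n)
  else 0

/-- The potency `p(a,e)` of a pattern: the sum over unordered edges of `Γ`,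
realised as half of the sum over ordered pairs. -/
def potency (d h n : ℕ) (H : SimpleGraph (Fin h)) (a : Fin h → ℝ → ℕ)
    (e : Fin h → ℝ → Fin h → ℝ → ℕ) : ℝ :=
  |(1 / 2 : ℝ) * ∑ i : Fin h, ∑ i' : Fin h, ∑ᶠ w : ℝ, ∑ᶠ w' : ℝ,
      potTerm d h n H a e (i, w) (i', w')|

/-- The maximal potency `p̃(a,e)` over subsets of the edges of `Γ`. -/
def potencyTilde (d h n : ℕ) (H : SimpleGraph (Fin h)) (a : Fin h → ℝ → ℕ)
    (e : Fin h → ℝ → Fin h → ℝ → ℕ) : ℝ :=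
  sSup {r : ℝ | ∃ E : Set ((Fin h × ℝ) × (Fin h × ℝ)),
    (∀ pq ∈ E, gammaAdj d h n H pq.1 pq.2) ∧
    (∀ p q, (p, q) ∈ E → (q, p) ∈ E) ∧
    r = |(1 / 2 : ℝ) * ∑ i : Fin h, ∑ i' : Fin h, ∑ᶠ w : ℝ, ∑ᶠ w' : ℝ,
        (if ((i, w), (i', w')) ∈ E then potTerm d h n H a e (i, w) (i', w') else 0)|}

/-- The type of the sub-pattern `(a,e)_S`, first component. -/
def restrictA {h : ℕ} (S : Set (Fin h × ℝ)) (a : Fin h → ℝ → ℕ) :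
    Fin h → ℝ → ℕ :=
  fun i w => if (i, w) ∈ S then a i w else 0

/-- The edge counts of the sub-pattern `(a,e)_S`, second component. -/
def restrictE {h : ℕ} (S : Set (Fin h × ℝ)) (e : Fin h → ℝ → Fin h → ℝ → ℕ) :
    Fin h → ℝ → Fin h → ℝ → ℕ :=
  fun i w i' w' => if (i, w) ∈ S ∧ (i', w') ∈ S then e i w i' w' else 0

/-- `A_{i,w}(y) = {v ∈ V_i : y_v = w}`. -/
def Aset {h n : ℕ} (y : Fin h × Fin n → ℝ) (i : Fin h) (w : ℝ) :
    Finset (Fin h × Fin n) :=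
  letI := Classical.decPred fun v : Fin h × Fin n => v.1 = i ∧ y v = w
  Finset.univ.filter fun v => v.1 = i ∧ y v = w

/-- The number of edges of `G` between the sets `A` and `B`. -/
def edgeCount {h n : ℕ} (G : SimpleGraph (Fin h × Fin n))
    (A B : Finset (Fin h × Fin n)) : ℕ :=
  letI := Classical.decPred fun pq : (Fin h × Fin n) × (Fin h × Fin n) => G.Adj pq.1 pq.2
  ((A ×ˢ B).filter fun pq => G.Adj pq.1 pq.2).card

/-- The pattern `(a,e)` can be found in `G` (with some witness `y ∈ Z`). -/
def canFind (d h n : ℕ) (H : SimpleGraph (Fin h)) (G : SimpleGraph (Fin h × Fin n))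
    (a : Fin h → ℝ → ℕ) (e : Fin h → ℝ → Fin h → ℝ → ℕ) : Prop :=
  ∃ y : Fin h × Fin n → ℝ, memZ d h n y ∧
    (∀ i : Fin h, ∀ w ∈ Dpos n h, a i w = (Aset y i w).card) ∧
    (∀ i w i' w', H.Adj i i' → w ∈ Dpos n h → w' ∈ Dpos n h →
      e i w i' w' = edgeCount G (Aset y i w) (Aset y i' w'))

/-- The normalised deviation `ε_{i,w,i',w'}` of a pattern. -/
def epsP {h : ℕ} (n : ℕ) (a : Fin h → ℝ → ℕ) (e : Fin h → ℝ → Fin h → ℝ → ℕ)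
    (p q : Fin h × ℝ) : ℝ :=
  if a p.1 p.2 = 0 ∨ a q.1 q.2 = 0 then 1
  else (e p.1 p.2 q.1 q.2 : ℝ) / ((a p.1 p.2 : ℝ) * (a q.1 q.2 : ℝ) / n) - 1

/-- `b(ε) = (1+ε)log(1+ε) − ε` (with `b(−1)=1`, automatic as `log 0 = 0`). -/
def bFun (x : ℝ) : ℝ := (1 + x) * Real.log (1 + x) - x

/-- The adjacency relation of the large-deviations graph `Γ_LD`. -/
def gammaLDAdj (d h n : ℕ) (H : SimpleGraph (Fin h)) (a : Fin h → ℝ → ℕ)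
    (e : Fin h → ℝ → Fin h → ℝ → ℕ) (p q : Fin h × ℝ) : Prop :=
  gammaAdj d h n H p q ∧ Real.exp 2 - 1 < epsP n a e p q

/-- The adjacency relation of the small-deviations graph `Γ_SD`. -/
def gammaSDAdj (d h n : ℕ) (H : SimpleGraph (Fin h)) (a : Fin h → ℝ → ℕ)
    (e : Fin h → ℝ → Fin h → ℝ → ℕ) (p q : Fin h × ℝ) : Prop :=
  gammaAdj d h n H p q ∧ epsP n a e p q ≤ Real.exp 2 - 1

/-- The summand `w w' (a_{i,w}a_{i',w'}/n) ε_{i,w,i',w'}` over `Γ_LD`. -/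
def potTermLD (d h n : ℕ) (H : SimpleGraph (Fin h)) (a : Fin h → ℝ → ℕ)
    (e : Fin h → ℝ → Fin h → ℝ → ℕ) (p q : Fin h × ℝ) : ℝ :=
  if gammaLDAdj d h n H a e p q then
    p.2 * q.2 * ((a p.1 p.2 : ℝ) * (a q.1 q.2 : ℝ) / n) * epsP n a e p q
  else 0

/-- The summand `w w' (a_{i,w}a_{i',w'}/n) ε_{i,w,i',w'}` over `Γ_SD`. -/
def potTermSD (d h n : ℕ) (H : SimpleGraph (Fin h)) (a : Fin h → ℝ → ℕ)
    (e : Fin h → ℝ → Fin h → ℝ → ℕ) (p q : Fin h × ℝ) : ℝ :=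
  if gammaSDAdj d h n H a e p q then
    p.2 * q.2 * ((a p.1 p.2 : ℝ) * (a q.1 q.2 : ℝ) / n) * epsP n a e p q
  else 0

/-- The large-deviations potency `p_LD(a,e)`. -/
def pLD (d h n : ℕ) (H : SimpleGraph (Fin h)) (a : Fin h → ℝ → ℕ)
    (e : Fin h → ℝ → Fin h → ℝ → ℕ) : ℝ :=
  |(1 / 2 : ℝ) * ∑ i : Fin h, ∑ i' : Fin h, ∑ᶠ w : ℝ, ∑ᶠ w' : ℝ,
      potTermLD d h n H a e (i, w) (i', w')|

/-- The small-deviations potency `p_SD(a,e)`. -/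
def pSD (d h n : ℕ) (H : SimpleGraph (Fin h)) (a : Fin h → ℝ → ℕ)
    (e : Fin h → ℝ → Fin h → ℝ → ℕ) : ℝ :=
  |(1 / 2 : ℝ) * ∑ i : Fin h, ∑ i' : Fin h, ∑ᶠ w : ℝ, ∑ᶠ w' : ℝ,
      potTermSD d h n H a e (i, w) (i', w')|

/-- The local large-deviations potency `p_LD((a,e);(i,w))`. -/
def pLDlocal (d h n : ℕ) (H : SimpleGraph (Fin h)) (a : Fin h → ℝ → ℕ)
    (e : Fin h → ℝ → Fin h → ℝ → ℕ) (p : Fin h × ℝ) : ℝ :=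
  |∑ i' : Fin h, ∑ᶠ w' : ℝ, potTermLD d h n H a e p (i', w')|

/-- The weighted neighbourhood mass `N̂_{i,w}(a,e)`. -/
def Nhat (d h n : ℕ) (H : SimpleGraph (Fin h)) (a : Fin h → ℝ → ℕ)
    (p : Fin h × ℝ) : ℝ :=
  ∑ i' : Fin h, ∑ᶠ w' : ℝ,
    (if gammaAdj d h n H p (i', w') then
      w' ^ 2 * (a i' w' : ℝ) * (w' / (p.2 * Real.sqrt d)) else 0)

/-- Condition (LD1) for a set `U ⊆ V(Γ)`. -/
def condLD1 (d h n : ℕ) (H : SimpleGraph (Fin h)) (L : ℝ) (a : Fin h → ℝ → ℕ)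
    (e : Fin h → ℝ → Fin h → ℝ → ℕ) (U : Set (Fin h × ℝ)) : Prop :=
  ∀ p ∈ U, L * (a p.1 p.2 : ℝ) * p.2 ^ 2 * Real.sqrt d ≤
    pLDlocal d h n H (restrictA U a) (restrictE U e) p

/-- Condition (LD2) for a set `U ⊆ V(Γ)`. -/
def condLD2 (d h n : ℕ) (H : SimpleGraph (Fin h)) (L : ℝ) (a : Fin h → ℝ → ℕ)
    (e : Fin h → ℝ → Fin h → ℝ → ℕ) (U : Set (Fin h × ℝ)) : Prop :=
  ∀ p ∈ U, L * Nhat d h n H a p / Real.sqrt d ≤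
    pLDlocal d h n H (restrictA U a) (restrictE U e) p

/-- `Π_{(i,w)∈S, a_{i,w}≥1} a_{i,w}^{d/4}`. -/
def prodA {h : ℕ} (d : ℕ) (S : Set (Fin h × ℝ)) (a : Fin h → ℝ → ℕ) : ℝ :=
  ∏ᶠ (p : Fin h × ℝ) (_ : p ∈ S ∧ 1 ≤ a p.1 p.2),
    ((a p.1 p.2 : ℝ) ^ ((d : ℝ) / 4))

/-- `Π_{(i,w)∈S, a_{i,w}≥1} C(n, min(a_{i,w}, ⌊n/2⌋))`. -/
def prodChoose {h : ℕ} (n : ℕ) (S : Set (Fin h × ℝ)) (a : Fin h → ℝ → ℕ) : ℝ :=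
  ∏ᶠ (p : Fin h × ℝ) (_ : p ∈ S ∧ 1 ≤ a p.1 p.2),
    ((n.choose (min (a p.1 p.2) (n / 2)) : ℝ))

/-- The number of matching edges between `A` and `B` under the bijection `M`. -/
def matchCount {n : ℕ} (M : Equiv.Perm (Fin n)) (A B : Finset (Fin n)) : ℕ :=
  (A.filter fun v => M v ∈ B).card

end

end RandomLifts

namespace RandomLifts


variable {V : Type*} [Fintype V] [DecidableEq V]
set_option linter.unusedSectionVars false

section Spec
open Matrix
lemma transpose_eq_of_herm' {A : Matrix V V ℝ} (hA : A.IsHermitian) : Aᵀ = A := by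
  ext i j
  have := congrFun (congrFun hA i) j
  simpa [Matrix.conjTranspose_apply] using this

lemma sum_dotProduct' {ι : Type*} (t : Finset ι) (f : ι → V → ℝ) (w : V → ℝ) :
    (∑ k ∈ t, f k) ⬝ᵥ w = ∑ k ∈ t, f k ⬝ᵥ w := by
  simp only [dotProduct, Finset.sum_apply, Finset.sum_mul]
  exact Finset.sum_comm

lemma dot_eigen_expand (A : Matrix V V ℝ) (hA : A.IsHermitian) (g : V → ℝ) :
    g ⬝ᵥ (A *ᵥ g) = ∑ k, hA.eigenvalues k * (g ⬝ᵥ (hA.eigenvectorBasis k : EuclideanSpace ℝ V)) ^ 2 ∧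
    g ⬝ᵥ g = ∑ k, (g ⬝ᵥ (hA.eigenvectorBasis k : EuclideanSpace ℝ V)) ^ 2 := by
  classical
  set b := hA.eigenvectorBasis with hb
  have hinner : ∀ k, (inner ℝ (b k) (WithLp.toLp 2 g : EuclideanSpace ℝ V) : ℝ) = g ⬝ᵥ (b k : EuclideanSpace ℝ V) := by
    intro k
    simp [PiLp.inner_apply, dotProduct, mul_comm]
  have hrepr : (∑ k, (g ⬝ᵥ (b k : EuclideanSpace ℝ V)) • (b k : V → ℝ)) = g := by
    have h2 := congrArg WithLp.ofLp (b.sum_repr' (WithLp.toLp 2 g : EuclideanSpace ℝ V))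
    calc (∑ k, (g ⬝ᵥ (b k : EuclideanSpace ℝ V)) • (b k : V → ℝ))
        = WithLp.ofLp (∑ k, (inner ℝ (b k) (WithLp.toLp 2 g : EuclideanSpace ℝ V) : ℝ) • (b k : EuclideanSpace ℝ V) : EuclideanSpace ℝ V) := by
          rw [WithLp.ofLp_sum]
          refine Finset.sum_congr rfl fun k _ => ?_
          rw [hinner, WithLp.ofLp_smul]
      _ = g := h2
  have hsymm : ∀ (w : V → ℝ) (k : V), (b k : V → ℝ) ⬝ᵥ w = w ⬝ᵥ (b k : V → ℝ) :=
    fun w k => dotProduct_comm _ _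
  constructor
  · nth_rewrite 1 [← hrepr]
    rw [sum_dotProduct']
    refine Finset.sum_congr rfl fun k _ => ?_
    rw [smul_dotProduct]
    have h4 : A *ᵥ (b k : V → ℝ) = hA.eigenvalues k • (b k : V → ℝ) :=
      hA.mulVec_eigenvectorBasis k
    have h3 : (b k : V → ℝ) ⬝ᵥ (A *ᵥ g) = hA.eigenvalues k * ((b k : V → ℝ) ⬝ᵥ g) := by
      rw [Matrix.dotProduct_mulVec, ← Matrix.mulVec_transpose, transpose_eq_of_herm' hA,
        h4, smul_dotProduct]
      rfl
    rw [h3, hsymm, smul_eq_mul]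
    ring
  · nth_rewrite 1 [← hrepr]
    rw [sum_dotProduct']
    refine Finset.sum_congr rfl fun k _ => ?_
    rw [smul_dotProduct, hsymm, smul_eq_mul, sq]


lemma dot_mulVec_expand (M : Matrix V V ℝ) (y : V → ℝ) :
    y ⬝ᵥ (M *ᵥ y) = ∑ u, ∑ w, y u * M u w * y w := by
  simp [dotProduct, Matrix.mulVec, Finset.mul_sum, mul_assoc]

lemma dot_self_pos {g : V → ℝ} (hg : g ≠ 0) : 0 < g ⬝ᵥ g := by
  have hnn : 0 ≤ g ⬝ᵥ g := Finset.sum_nonneg fun v _ => mul_self_nonneg _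
  rcases hnn.lt_or_eq with h | h
  · exact h
  · exfalso
    apply hg
    funext v
    have h0 : ∀ u ∈ Finset.univ, 0 ≤ g u * g u := fun u _ => mul_self_nonneg _
    have := (Finset.sum_eq_zero_iff_of_nonneg h0).mp h.symm v (Finset.mem_univ v)
    have : g v * g v = 0 := this
    simpa [mul_self_eq_zero] using this

lemma exists_eigen_dot (A : Matrix V V ℝ) (hA : A.IsHermitian) (g : V → ℝ) (hg : g ≠ 0) :
    ∃ (μ : ℝ) (v : V → ℝ), A *ᵥ v = μ • v ∧ g ⬝ᵥ v ≠ 0 ∧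
      g ⬝ᵥ (A *ᵥ g) ≤ μ * (g ⬝ᵥ g) := by
  classical
  obtain ⟨hexp, hpar⟩ := dot_eigen_expand A hA g
  set c : V → ℝ := fun k => g ⬝ᵥ (hA.eigenvectorBasis k : EuclideanSpace ℝ V) with hc
  have hK : (Finset.univ.filter fun k => c k ≠ 0).Nonempty := by
    by_contra hemp
    rw [Finset.not_nonempty_iff_eq_empty, Finset.filter_eq_empty_iff] at hemp
    have : g ⬝ᵥ g = 0 := by
      rw [hpar]
      refine Finset.sum_eq_zero fun k _ => ?_
      have := hemp (Finset.mem_univ k)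
      simp only [not_not] at this
      simpa [hc, sq] using this
    exact absurd this (dot_self_pos hg).ne'
  obtain ⟨k, hkmem, hkmax⟩ := Finset.exists_max_image _ (fun k => hA.eigenvalues k) hK
  refine ⟨hA.eigenvalues k, hA.eigenvectorBasis k, hA.mulVec_eigenvectorBasis k, ?_, ?_⟩
  · exact (Finset.mem_filter.mp hkmem).2
  · rw [hexp, hpar, Finset.mul_sum]
    refine Finset.sum_le_sum fun j _ => ?_
    by_cases hj : c j = 0
    · have hj' : g ⬝ᵥ (hA.eigenvectorBasis j : EuclideanSpace ℝ V) = 0 := hj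
      rw [hj']
      simp
    · have hjK : j ∈ Finset.univ.filter fun k => c k ≠ 0 :=
        Finset.mem_filter.mpr ⟨Finset.mem_univ j, hj⟩
      have hle := hkmax j hjK
      have : (0 : ℝ) ≤ c j ^ 2 := sq_nonneg _
      exact mul_le_mul_of_nonneg_right hle this

lemma rayleigh_le_max (A : Matrix V V ℝ) (hA : A.IsHermitian) [Nonempty V] :
    ∃ (μ : ℝ) (v : V → ℝ), v ⬝ᵥ v = 1 ∧ A *ᵥ v = μ • v ∧
      ∀ x : V → ℝ, x ⬝ᵥ (A *ᵥ x) ≤ μ * (x ⬝ᵥ x) := by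
  classical
  obtain ⟨k, _, hkmax⟩ := Finset.exists_max_image Finset.univ
      (fun k => hA.eigenvalues k) Finset.univ_nonempty
  refine ⟨hA.eigenvalues k, hA.eigenvectorBasis k, ?_, hA.mulVec_eigenvectorBasis k, ?_⟩
  · have h1 : (inner ℝ (hA.eigenvectorBasis k) (hA.eigenvectorBasis k) : ℝ) = 1 := by
      have := orthonormal_iff_ite.mp hA.eigenvectorBasis.orthonormal k k
      simpa using this
    rw [← h1]
    simp only [PiLp.inner_apply, dotProduct, RCLike.inner_apply, conj_trivial]
  · intro x
    obtain ⟨hexp, hpar⟩ := dot_eigen_expand A hA x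
    rw [hexp, hpar, Finset.mul_sum]
    exact Finset.sum_le_sum fun j _ =>
      mul_le_mul_of_nonneg_right (hkmax j (Finset.mem_univ j)) (sq_nonneg _)


end Spec

section LiftAux
open Matrix
variable {h n : ℕ} (H : SimpleGraph (Fin h)) [DecidableRel H.Adj] (ω : LiftSpace h n)

lemma adjMat_isHermitian {W : Type*} (G : SimpleGraph W) : (adjMat G).IsHermitian := by
  ext u v
  simp only [adjMat, Matrix.conjTranspose_apply]
  rw [show ∀ r : ℝ, star r = r from fun r => rfl]
  by_cases hadj : G.Adj v u
  · rw [if_pos hadj, if_pos (hadj.symm)]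
  · rw [if_neg hadj, if_neg (fun hx => hadj hx.symm)]

lemma adjMat_comm {W : Type*} (G : SimpleGraph W) (u v : W) :
    adjMat G u v = adjMat G v u := by
  simp only [adjMat]
  by_cases hadj : G.Adj u v
  · rw [if_pos hadj, if_pos hadj.symm]
  · rw [if_neg hadj, if_neg (fun hx => hadj hx.symm)]

lemma rowBlock (v : Fin h × Fin n) (i' : Fin h) :
    ∑ j : Fin n, adjMat (liftGraph H ω) v (i', j) = if H.Adj v.1 i' then 1 else 0 := by
  by_cases hadj : H.Adj v.1 i'
  · rw [if_pos hadj]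
    have hne : v.1 ≠ i' := H.ne_of_adj hadj
    rcases lt_or_gt_of_ne hne with hlt | hgt
    · have : ∀ j : Fin n, adjMat (liftGraph H ω) v (i', j)
          = if j = ω v.1 i' v.2 then (1 : ℝ) else 0 := by
        intro j
        simp only [adjMat]
        by_cases hj : j = ω v.1 i' v.2
        · rw [if_pos hj, if_pos (show (liftGraph H ω).Adj v (i', j) from ⟨hadj, Or.inl ⟨hlt, hj⟩⟩)]
        · rw [if_neg hj, if_neg]
          rintro ⟨-, hor⟩
          rcases hor with ⟨-, hj2⟩ | ⟨hlt2, -⟩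
          · exact hj hj2
          · exact absurd hlt (asymm hlt2)
      rw [Finset.sum_congr rfl fun j _ => this j]
      simp
    · have : ∀ j : Fin n, adjMat (liftGraph H ω) v (i', j)
          = if j = (ω i' v.1).symm v.2 then (1 : ℝ) else 0 := by
        intro j
        simp only [adjMat]
        by_cases hj : j = (ω i' v.1).symm v.2
        · have hcond : v.2 = ω i' v.1 j := by rw [hj]; simp
          rw [if_pos hj, if_pos (show (liftGraph H ω).Adj v (i', j) from ⟨hadj, Or.inr ⟨hgt, hcond⟩⟩)]
        · rw [if_neg hj, if_neg]
          rintro ⟨-, hor⟩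
          rcases hor with ⟨hlt2, -⟩ | ⟨-, hj2⟩
          · exact absurd hlt2 (asymm hgt)
          · exact hj (by rw [hj2]; simp)
      rw [Finset.sum_congr rfl fun j _ => this j]
      simp
  · rw [if_neg hadj]
    refine Finset.sum_eq_zero fun j _ => ?_
    simp only [adjMat]
    rw [if_neg]
    rintro ⟨hadj2, -⟩
    exact hadj hadj2

lemma colBlock (v : Fin h × Fin n) (i' : Fin h) :
    ∑ j : Fin n, adjMat (liftGraph H ω) (i', j) v = if H.Adj v.1 i' then 1 else 0 := by
  rw [← rowBlock H ω v i']
  exact Finset.sum_congr rfl fun j _ => adjMat_comm _ _ _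

/-- fibre sum of `A *ᵥ x`. -/
lemma fibreSum_mulVec (x : Fin h × Fin n → ℝ) (i : Fin h) :
    ∑ j : Fin n, (adjMat (liftGraph H ω) *ᵥ x) (i, j)
      = ∑ i' : Fin h, if H.Adj i i' then (∑ j : Fin n, x (i', j)) else 0 := by
  have step1 : ∑ j : Fin n, (adjMat (liftGraph H ω) *ᵥ x) (i, j)
      = ∑ u : Fin h × Fin n, (∑ j : Fin n, adjMat (liftGraph H ω) (i, j) u) * x u := by
    simp only [Matrix.mulVec, dotProduct, Finset.sum_mul]
    exact Finset.sum_comm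
  rw [step1]
  have step2 : ∀ u : Fin h × Fin n,
      (∑ j : Fin n, adjMat (liftGraph H ω) (i, j) u) * x u
        = (if H.Adj u.1 i then 1 else 0) * x u := by
    intro u
    rw [colBlock H ω u i]
  rw [Finset.sum_congr rfl fun u _ => step2 u]
  rw [Fintype.sum_prod_type]
  refine Finset.sum_congr rfl fun i' _ => ?_
  by_cases hadj : H.Adj i i'
  · rw [if_pos hadj]
    refine Finset.sum_congr rfl fun j _ => ?_
    rw [if_pos (hadj.symm), one_mul]
  · rw [if_neg hadj]
    refine Finset.sum_eq_zero fun j _ => ?_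
    rw [if_neg (fun hx : H.Adj (i', j).1 i => hadj hx.symm), zero_mul]

/-- `A` applied to a fibre-constant vector. -/
lemma mulVec_fibreConst (c : Fin h → ℝ) (v : Fin h × Fin n) :
    (adjMat (liftGraph H ω) *ᵥ fun u => c u.1) v
      = ∑ i' : Fin h, if H.Adj v.1 i' then c i' else 0 := by
  have : (adjMat (liftGraph H ω) *ᵥ fun u => c u.1) v
      = ∑ i' : Fin h, (∑ j : Fin n, adjMat (liftGraph H ω) v (i', j)) * c i' := by
    simp only [Matrix.mulVec, dotProduct, Fintype.sum_prod_type, Finset.sum_mul]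
  rw [this]
  refine Finset.sum_congr rfl fun i' _ => ?_
  rw [rowBlock H ω v i']
  by_cases hadj : H.Adj v.1 i'
  · rw [if_pos hadj, if_pos hadj, one_mul]
  · rw [if_neg hadj, if_neg hadj, zero_mul]

lemma lambdaStar_set_bddAbove (G : SimpleGraph (Fin h × Fin n)) :
    BddAbove {r : ℝ | ∃ (μ : ℝ) (x : Fin h × Fin n → ℝ), x ≠ 0 ∧
      (adjMat G).mulVec x = μ • x ∧ (∀ i : Fin h, ∑ j : Fin n, x (i, j) = 0) ∧ r = |μ|} := by
  refine ⟨(Fintype.card (Fin h × Fin n) : ℝ), ?_⟩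
  rintro r ⟨μ, x, hx0, heig, -, rfl⟩
  rcases isEmpty_or_nonempty (Fin h × Fin n) with he | hne
  · exact absurd (funext fun v => (he.false v).elim) hx0
  obtain ⟨vmax, -, hvmax⟩ := Finset.exists_max_image Finset.univ
    (fun v => |x v|) Finset.univ_nonempty
  have hpos : 0 < |x vmax| := by
    rcases (abs_nonneg (x vmax)).lt_or_eq with hlt | heq
    · exact hlt
    · exfalso
      apply hx0
      funext v
      have h1 := hvmax v (Finset.mem_univ v)
      have h2 : |x v| ≤ 0 := by rw [← heq] at h1; exact h1
      exact abs_eq_zero.mp (le_antisymm h2 (abs_nonneg _))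
  have hkey : |μ| * |x vmax| ≤ (Fintype.card (Fin h × Fin n) : ℝ) * |x vmax| := by
    have h1 : |μ| * |x vmax| = |(adjMat G *ᵥ x) vmax| := by
      rw [heig]
      rw [show (μ • x) vmax = μ * x vmax from rfl, abs_mul]
    rw [h1]
    have h2 : |(adjMat G *ᵥ x) vmax| ≤ ∑ u, |adjMat G vmax u * x u| :=
      Finset.abs_sum_le_sum_abs _ _
    refine h2.trans ?_
    have h3 : ∀ u : Fin h × Fin n, |adjMat G vmax u * x u| ≤ |x vmax| := by
      intro u
      rw [abs_mul]
      have ha : |adjMat G vmax u| ≤ 1 := by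
        simp only [adjMat]
        split <;> norm_num
      calc |adjMat G vmax u| * |x u| ≤ 1 * |x vmax| :=
            mul_le_mul ha (hvmax u (Finset.mem_univ u)) (abs_nonneg _) zero_le_one
        _ = |x vmax| := one_mul _
    calc ∑ u, |adjMat G vmax u * x u| ≤ ∑ _u : Fin h × Fin n, |x vmax| :=
          Finset.sum_le_sum fun u _ => h3 u
      _ = (Fintype.card (Fin h × Fin n) : ℝ) * |x vmax| := by
          rw [Finset.sum_const, Finset.card_univ, nsmul_eq_mul]
  exact le_of_mul_le_mul_right hkey hpos

lemma abs_le_lambdaStar {G : SimpleGraph (Fin h × Fin n)} {μ : ℝ} {x : Fin h × Fin n → ℝ}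
    (hx0 : x ≠ 0) (heig : (adjMat G).mulVec x = μ • x)
    (hbal : ∀ i : Fin h, ∑ j : Fin n, x (i, j) = 0) : |μ| ≤ lambdaStar G := by
  rw [lambdaStar]
  exact le_csSup (lambdaStar_set_bddAbove G) ⟨μ, x, hx0, heig, hbal, rfl⟩

lemma lambdaStar_nonneg (G : SimpleGraph (Fin h × Fin n)) : 0 ≤ lambdaStar G := by
  rw [lambdaStar]
  rcases Set.eq_empty_or_nonempty {r : ℝ | ∃ (μ : ℝ) (x : Fin h × Fin n → ℝ), x ≠ 0 ∧
      (adjMat G).mulVec x = μ • x ∧ (∀ i : Fin h, ∑ j : Fin n, x (i, j) = 0) ∧ r = |μ|}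
    with he | ⟨r, hr⟩
  · rw [he, Real.sSup_empty]
  · obtain ⟨μ, x, hx0, heig, hbal, hre⟩ := hr
    have h1 : (0 : ℝ) ≤ r := hre.ge.trans' (abs_nonneg μ) |>.trans_eq rfl
    exact h1.trans (le_csSup (lambdaStar_set_bddAbove G)
      ⟨μ, x, hx0, heig, hbal, hre⟩)

end LiftAux


open Matrix in
set_option maxHeartbeats 1000000 in
theorem statement2 (d h n : ℕ) (hd : 2 ≤ d) (hn : 1 ≤ n) (H : SimpleGraph (Fin h))
    [DecidableRel H.Adj] (hreg : H.IsRegularOfDegree d) (ω : LiftSpace h n)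
    (s : Finset (Fin h × Fin n))
    (hs : (s.card : ℝ) ≤ (n : ℝ) - (h : ℝ) * Real.sqrt n) :
    lambdaMax ((liftGraph H ω).induce (↑s : Set (Fin h × Fin n))) - 7 / 2 ≤
      lambdaStar (liftGraph H ω) := by
  classical
  set G : SimpleGraph (Fin h × Fin n) := liftGraph H ω with hG
  rcases s.eq_empty_or_nonempty with hse | ⟨v₀, hv₀⟩
  · have hset : {μ : ℝ | ∃ x : ↥(↑s : Set (Fin h × Fin n)) → ℝ, x ≠ 0 ∧
        (adjMat (G.induce (↑s : Set (Fin h × Fin n)))).mulVec x = μ • x} = ∅ := by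
      refine Set.eq_empty_iff_forall_notMem.mpr ?_
      rintro μ ⟨x, hx0, -⟩
      exact hx0 (funext fun v => absurd v.2 (by simp [hse]))
    rw [lambdaMax, hset, Real.sSup_empty]
    linarith [lambdaStar_nonneg G]
  -- main case
  have hn0 : (0 : ℝ) < n := by exact_mod_cast hn
  have hh0 : 0 < h := v₀.1.pos
  have hh1 : (1 : ℝ) ≤ h := by exact_mod_cast hh0
  have hsq1 : (1 : ℝ) ≤ Real.sqrt n := by
    rw [show (1 : ℝ) = Real.sqrt 1 from (Real.sqrt_one).symm]
    exact Real.sqrt_le_sqrt (by exact_mod_cast hn)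
  have hsn : (s.card : ℝ) < n := by nlinarith
  have hn' : (n : ℝ) ≠ 0 := ne_of_gt hn0
  haveI hne' : Nonempty ↥(↑s : Set (Fin h × Fin n)) := ⟨⟨v₀, by simpa using hv₀⟩⟩
  set A := adjMat G with hA_def
  have hA : A.IsHermitian := adjMat_isHermitian G
  set G' := G.induce (↑s : Set (Fin h × Fin n)) with hG'
  set B := adjMat G' with hB_def
  have hB : B.IsHermitian := adjMat_isHermitian G'
  have hBnn : ∀ u w, 0 ≤ B u w := by
    intro u w
    rw [hB_def]
    simp only [adjMat]
    split <;> norm_num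
  obtain ⟨μmax, xv, hxv1, hxveig, hxvray⟩ := rayleigh_le_max B hB
  -- μmax nonneg
  have hmu0 : 0 ≤ μmax := by
    set w0 : ↥(↑s : Set (Fin h × Fin n)) := Classical.arbitrary _ with hw0
    have h1 := hxvray (Pi.single w0 1)
    have h2 : (Pi.single w0 1 : ↥(↑s : Set (Fin h × Fin n)) → ℝ) ⬝ᵥ
        (B *ᵥ Pi.single w0 1) = 0 := by
      rw [dot_mulVec_expand]
      refine Finset.sum_eq_zero fun u _ => Finset.sum_eq_zero fun w' _ => ?_
      by_cases hu : u = w0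
      · by_cases hw : w' = w0
        · have hd0 : B u w' = 0 := by
            rw [hB_def]
            simp only [adjMat]
            rw [if_neg (by rw [hu, hw]; exact G'.irrefl)]
          rw [hd0, mul_zero, zero_mul]
        · rw [Pi.single_eq_of_ne hw, mul_zero]
      · rw [Pi.single_eq_of_ne hu, zero_mul, zero_mul]
    have h3 : (Pi.single w0 1 : ↥(↑s : Set (Fin h × Fin n)) → ℝ) ⬝ᵥ Pi.single w0 1 = 1 := by
      simp [dotProduct, Pi.single_apply]
    rw [h2, h3, mul_one] at h1
    linarith
  -- lambdaMax ≤ μmax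
  have hlm : lambdaMax G' ≤ μmax := by
    rw [lambdaMax]
    refine Real.sSup_le ?_ hmu0
    rintro μ' ⟨x, hx0, hxeq⟩
    have h1 : x ⬝ᵥ (B *ᵥ x) = μ' * (x ⬝ᵥ x) := by
      rw [hxeq, dotProduct_smul, smul_eq_mul]
    have h2 := hxvray x
    have h3 := dot_self_pos hx0
    nlinarith
  -- nonnegative top eigenvector
  set f0 : ↥(↑s : Set (Fin h × Fin n)) → ℝ := fun v => |xv v| with hf0
  have hf0dot : f0 ⬝ᵥ f0 = 1 := by
    rw [← hxv1]
    refine Finset.sum_congr rfl fun v _ => ?_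
    simp [hf0, abs_mul_abs_self]
  have hf0ray : μmax ≤ f0 ⬝ᵥ (B *ᵥ f0) := by
    have h1 : xv ⬝ᵥ (B *ᵥ xv) = μmax := by
      rw [hxveig, dotProduct_smul, smul_eq_mul, hxv1, mul_one]
    rw [← h1, dot_mulVec_expand, dot_mulVec_expand]
    apply Finset.sum_le_sum
    intro u _
    apply Finset.sum_le_sum
    intro w _
    calc xv u * B u w * xv w ≤ |xv u * B u w * xv w| := le_abs_self _
      _ = |xv u| * B u w * |xv w| := by
          rw [abs_mul, abs_mul, abs_of_nonneg (hBnn u w)]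
      _ = f0 u * B u w * f0 w := rfl
  -- the extended vector f
  set f : Fin h × Fin n → ℝ :=
    fun v => if hv : v ∈ s then f0 ⟨v, Finset.mem_coe.mpr hv⟩ else 0 with hf
  have hf_out : ∀ v ∉ s, f v = 0 := fun v hv => dif_neg hv
  have hf_in : ∀ (v) (hv : v ∈ s), f v = f0 ⟨v, Finset.mem_coe.mpr hv⟩ :=
    fun v hv => dif_pos hv
  have hf_nn : ∀ v, 0 ≤ f v := by
    intro v
    by_cases hv : v ∈ s
    · rw [hf_in v hv]; exact abs_nonneg _
    · rw [hf_out v hv]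
  -- transfer of sums supported on s
  have hsum_s : ∀ F : Fin h × Fin n → ℝ, (∀ v ∉ s, F v = 0) →
      ∑ v, F v = ∑ v : ↥(↑s : Set (Fin h × Fin n)), F ↑v := by
    intro F hF
    have e : {x : Fin h × Fin n // x ∈ s} ≃ ↥(↑s : Set (Fin h × Fin n)) :=
      ⟨fun x => ⟨x.1, x.2⟩, fun x => ⟨x.1, x.2⟩, fun x => rfl, fun x => rfl⟩
    rw [← Finset.sum_subset (Finset.subset_univ s) (fun v _ hv => hF v hv)]
    exact Finset.sum_subtype s (fun x => Finset.mem_coe.symm) F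
  have hval : ∀ v : ↥(↑s : Set (Fin h × Fin n)), f ↑v = f0 v := by
    intro v
    rw [hf_in ↑v (Finset.mem_coe.mp v.2)]
  have hAB : ∀ u w : ↥(↑s : Set (Fin h × Fin n)), A (↑u) (↑w) = B u w := by
    intro u w
    rw [hA_def, hB_def]
    simp only [adjMat]
    have : G'.Adj u w ↔ G.Adj ↑u ↑w := Iff.rfl
    by_cases hadj : G.Adj ↑u ↑w
    · rw [if_pos hadj, if_pos (this.mpr hadj)]
    · rw [if_neg hadj, if_neg (fun hx => hadj (this.mp hx))]
  have hfdot : ∑ v, f v * f v = 1 := by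
    rw [hsum_s (fun v => f v * f v)
      (fun v hv => by show f v * f v = 0; rw [hf_out v hv, mul_zero])]
    rw [← hf0dot]
    exact Finset.sum_congr rfl fun v _ => by rw [hval v]
  have hfAf : μmax ≤ f ⬝ᵥ (A *ᵥ f) := by
    have htrans : f ⬝ᵥ (A *ᵥ f) = f0 ⬝ᵥ (B *ᵥ f0) := by
      rw [dot_mulVec_expand, dot_mulVec_expand]
      rw [hsum_s (fun u => ∑ w, f u * A u w * f w)
        (fun u hu => Finset.sum_eq_zero fun w _ => by
          show f u * A u w * f w = 0
          rw [hf_out u hu, zero_mul, zero_mul])]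
      refine Finset.sum_congr rfl fun u _ => ?_
      rw [hsum_s (fun w => f ↑u * A ↑u w * f w)
        (fun w hw => by show f ↑u * A ↑u w * f w = 0; rw [hf_out w hw, mul_zero])]
      refine Finset.sum_congr rfl fun w _ => ?_
      rw [hval u, hval w, hAB u w]
    rw [htrans]
    exact hf0ray
  -- fibre sums of f
  set uv : Fin h → ℝ := fun i => ∑ j, f (i, j) with huv
  have huv_nn : ∀ i, 0 ≤ uv i := fun i => Finset.sum_nonneg fun j _ => hf_nn _
  have husum : ∑ i, uv i = ∑ v, f v := by
    rw [Fintype.sum_prod_type]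
  have hfsq1 : ∑ v, f v ^ 2 = 1 := by
    rw [← hfdot]
    exact Finset.sum_congr rfl fun v _ => sq (f v)
  have hsumf_sq : (∑ v, f v) ^ 2 ≤ (s.card : ℝ) := by
    have h1 : ∑ v, f v = ∑ v ∈ s, f v :=
      (Finset.sum_subset (Finset.subset_univ s) (fun v _ hv => hf_out v hv)).symm
    have h2 : (∑ v ∈ s, f v) ^ 2 ≤ (s.card : ℝ) * ∑ v ∈ s, f v ^ 2 := by
      exact_mod_cast sq_sum_le_card_mul_sum_sq (s := s) (f := f)
    have h3 : ∑ v ∈ s, f v ^ 2 = 1 := by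
      rw [Finset.sum_subset (Finset.subset_univ s)
        (fun v _ hv => by rw [hf_out v hv]; norm_num), hfsq1]
    rw [h1]
    rw [h3, mul_one] at h2
    exact h2
  have hfib_sq : ∀ i, ∑ j, f (i, j) ^ 2 ≤ 1 := by
    intro i
    rw [← hfsq1, Fintype.sum_prod_type]
    exact Finset.single_le_sum (f := fun i' => ∑ j, f (i', j) ^ 2)
      (fun i' _ => Finset.sum_nonneg fun j _ => sq_nonneg _) (Finset.mem_univ i)
  have husq : ∀ i, uv i ^ 2 ≤ ((s.filter fun v => v.1 = i).card : ℝ) * ∑ j, f (i, j) ^ 2 := by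
    intro i
    set T : Finset (Fin n) := Finset.univ.filter (fun j => (i, j) ∈ s) with hT
    have h1 : uv i = ∑ j ∈ T, f (i, j) :=
      (Finset.sum_subset (Finset.subset_univ T)
        (fun j _ hj => hf_out (i, j) (by
          simp only [hT, Finset.mem_filter, Finset.mem_univ, true_and] at hj
          exact hj))).symm
    have h2 : (∑ j ∈ T, f (i, j)) ^ 2 ≤ (T.card : ℝ) * ∑ j ∈ T, f (i, j) ^ 2 := by
      exact_mod_cast sq_sum_le_card_mul_sum_sq (s := T) (f := fun j => f (i, j))
    have h3 : ∑ j ∈ T, f (i, j) ^ 2 ≤ ∑ j, f (i, j) ^ 2 :=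
      Finset.sum_le_sum_of_subset_of_nonneg (Finset.subset_univ T)
        (fun j _ _ => sq_nonneg _)
    have h4 : T.card = (s.filter fun v => v.1 = i).card := by
      refine Finset.card_bij' (fun j _ => (i, j)) (fun v _ => v.2) ?_ ?_ ?_ ?_
      · intro j hj
        simp only [hT, Finset.mem_filter, Finset.mem_univ, true_and] at hj
        exact Finset.mem_filter.mpr ⟨hj, rfl⟩
      · intro v hv
        rw [Finset.mem_filter] at hv
        simp only [hT, Finset.mem_filter, Finset.mem_univ, true_and]
        rw [← hv.2]
        exact hv.1
      · intro j hj; rfl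
      · intro v hv
        rcases v with ⟨v1, v2⟩
        rw [Finset.mem_filter] at hv
        have hv2 : v1 = i := hv.2
        subst hv2
        rfl
    rw [h1, ← h4]
    calc (∑ j ∈ T, f (i, j)) ^ 2 ≤ (T.card : ℝ) * ∑ j ∈ T, f (i, j) ^ 2 := h2
      _ ≤ (T.card : ℝ) * ∑ j, f (i, j) ^ 2 := by
          exact mul_le_mul_of_nonneg_left h3 (by positivity)
  have hsum_usq : ∑ i, uv i ^ 2 ≤ (s.card : ℝ) := by
    have h1 : ∑ i, uv i ^ 2 ≤ ∑ i, ((s.filter fun v => v.1 = i).card : ℝ) := by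
      refine Finset.sum_le_sum fun i _ => ?_
      calc uv i ^ 2 ≤ ((s.filter fun v => v.1 = i).card : ℝ) * ∑ j, f (i, j) ^ 2 := husq i
        _ ≤ ((s.filter fun v => v.1 = i).card : ℝ) * 1 :=
            mul_le_mul_of_nonneg_left (hfib_sq i) (by positivity)
        _ = _ := mul_one _
    have h2 : ∑ i : Fin h, ((s.filter fun v => v.1 = i).card : ℝ) = (s.card : ℝ) := by
      rw [← Nat.cast_sum]
      congr 1
      exact (Finset.card_eq_sum_card_fiberwise (fun v _ => Finset.mem_univ v.1)).symm
    linarith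
  set ε : ℝ := (∑ i, uv i ^ 2) / n with hε
  have hε0 : 0 ≤ ε := by
    rw [hε]
    positivity
  have hεlt : ε < 1 := by
    rw [hε, div_lt_one hn0]
    linarith
  -- projection
  set c : Fin h → ℝ := fun i => uv i / n with hc
  set p : Fin h × Fin n → ℝ := fun v => c v.1 with hp
  set g : Fin h × Fin n → ℝ := fun v => f v - p v with hg_def
  have hfp : ∑ v, f v * p v = ε := by
    rw [hε, Fintype.sum_prod_type, Finset.sum_div]
    refine Finset.sum_congr rfl fun i _ => ?_
    have h1 : ∀ y : Fin n, f (i, y) * p (i, y) = f (i, y) * c i := fun y => rfl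
    rw [Finset.sum_congr rfl fun y _ => h1 y, ← Finset.sum_mul]
    have h2 : c i = uv i / n := rfl
    have h3 : ∑ y : Fin n, f (i, y) = uv i := rfl
    rw [h2, h3, sq]
    field_simp
  have hpp : ∑ v, p v * p v = ε := by
    rw [hε, Fintype.sum_prod_type, Finset.sum_div]
    refine Finset.sum_congr rfl fun i _ => ?_
    have h1 : ∀ y : Fin n, p (i, y) * p (i, y) = c i * c i := fun y => rfl
    rw [Finset.sum_congr rfl fun y _ => h1 y]
    rw [Finset.sum_const, Finset.card_univ, Fintype.card_fin, nsmul_eq_mul]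
    have h2 : c i = uv i / n := rfl
    rw [h2, sq]
    field_simp
  have hgg : g ⬝ᵥ g = 1 - ε := by
    have h1 : ∀ v, g v * g v = f v * f v - 2 * (f v * p v) + p v * p v := by
      intro v
      rw [hg_def]
      ring
    rw [show g ⬝ᵥ g = ∑ v, g v * g v from rfl, Finset.sum_congr rfl fun v _ => h1 v]
    rw [Finset.sum_add_distrib, Finset.sum_sub_distrib, ← Finset.mul_sum, hfdot, hfp, hpp]
    ring
  -- the quantity Q
  set Q : ℝ := ∑ i, ∑ i', if H.Adj i i' then uv i * c i' else 0 with hQ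
  have hApf_v : ∀ v, (A *ᵥ p) v = ∑ i', if H.Adj v.1 i' then c i' else 0 := by
    intro v
    rw [hA_def, hG, hp]
    exact mulVec_fibreConst H ω c v
  have hfAp : f ⬝ᵥ (A *ᵥ p) = Q := by
    calc f ⬝ᵥ (A *ᵥ p) = ∑ v, f v * (A *ᵥ p) v := rfl
      _ = ∑ i, ∑ y, f (i, y) * ∑ i', if H.Adj i i' then c i' else 0 := by
          rw [Finset.sum_congr rfl fun v _ => by rw [hApf_v v], Fintype.sum_prod_type]
      _ = ∑ i, (∑ y, f (i, y)) * ∑ i', if H.Adj i i' then c i' else 0 := by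
          exact Finset.sum_congr rfl fun i _ => (Finset.sum_mul _ _ _).symm
      _ = Q := by
          rw [hQ]
          refine Finset.sum_congr rfl fun i _ => ?_
          rw [Finset.mul_sum]
          exact Finset.sum_congr rfl fun i' _ => by rw [mul_ite, mul_zero]
  have hpAf : p ⬝ᵥ (A *ᵥ f) = Q := by
    have h2 : ∀ i : Fin h, ∑ j, (A *ᵥ f) (i, j)
        = ∑ i', if H.Adj i i' then uv i' else 0 := by
      intro i
      rw [hA_def, hG]
      exact fibreSum_mulVec H ω f i
    calc p ⬝ᵥ (A *ᵥ f) = ∑ v, p v * (A *ᵥ f) v := rfl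
      _ = ∑ i, ∑ j, c i * (A *ᵥ f) (i, j) := by rw [Fintype.sum_prod_type]
      _ = ∑ i, c i * ∑ i', if H.Adj i i' then uv i' else 0 := by
          refine Finset.sum_congr rfl fun i _ => ?_
          rw [← Finset.mul_sum, h2 i]
      _ = ∑ i, ∑ i', if H.Adj i i' then c i * uv i' else 0 := by
          refine Finset.sum_congr rfl fun i _ => ?_
          rw [Finset.mul_sum]
          exact Finset.sum_congr rfl fun i' _ => by rw [mul_ite, mul_zero]
      _ = Q := by
          rw [hQ, Finset.sum_comm]
          refine Finset.sum_congr rfl fun i _ => ?_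
          refine Finset.sum_congr rfl fun i' _ => ?_
          exact if_congr ⟨fun hx => hx.symm, fun hx => hx.symm⟩ (mul_comm _ _) rfl
  have hpAp : p ⬝ᵥ (A *ᵥ p) = Q := by
    calc p ⬝ᵥ (A *ᵥ p) = ∑ v, p v * (A *ᵥ p) v := rfl
      _ = ∑ i, ∑ y : Fin n, c i * ∑ i', if H.Adj i i' then c i' else 0 := by
          rw [Finset.sum_congr rfl fun v _ => by rw [hApf_v v], Fintype.sum_prod_type]
      _ = ∑ i, (n : ℝ) * (c i * ∑ i', if H.Adj i i' then c i' else 0) := by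
          refine Finset.sum_congr rfl fun i _ => ?_
          rw [Finset.sum_const, Finset.card_univ, Fintype.card_fin, nsmul_eq_mul]
      _ = Q := by
          rw [hQ]
          refine Finset.sum_congr rfl fun i _ => ?_
          rw [Finset.mul_sum, Finset.mul_sum]
          refine Finset.sum_congr rfl fun i' _ => ?_
          rw [mul_ite, mul_zero, mul_ite, mul_zero]
          refine if_congr Iff.rfl ?_ rfl
          have h2 : c i = uv i / n := rfl
          rw [h2]
          field_simp
  have hgAg : g ⬝ᵥ (A *ᵥ g) = f ⬝ᵥ (A *ᵥ f) - Q := by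
    have hgfp : g = f - p := rfl
    rw [hgfp, Matrix.mulVec_sub, sub_dotProduct, dotProduct_sub,
      dotProduct_sub, hfAp, hpAf, hpAp]
    ring
  have hQle : Q ≤ 1 - ε := by
    have hstep : Q ≤ ∑ i, ∑ i',
        (uv i * uv i' / n - if i = i' then uv i * uv i' / n else 0) := by
      rw [hQ]
      refine Finset.sum_le_sum fun i _ => Finset.sum_le_sum fun i' _ => ?_
      by_cases hadj : H.Adj i i'
      · rw [if_pos hadj, if_neg (H.ne_of_adj hadj)]
        have h1 : uv i * c i' = uv i * uv i' / n := by
          rw [show c i' = uv i' / n from rfl]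
          ring
        rw [h1, sub_zero]
      · rw [if_neg hadj]
        by_cases hii : i = i'
        · rw [if_pos hii]
          simp
        · rw [if_neg hii, sub_zero]
          exact div_nonneg (mul_nonneg (huv_nn i) (huv_nn i')) hn0.le
    have h1 : ∑ i, ∑ i', uv i * uv i' / n = (∑ v, f v) ^ 2 / n := by
      rw [← husum, sq, Finset.sum_mul_sum, Finset.sum_div]
      refine Finset.sum_congr rfl fun i _ => ?_
      rw [Finset.sum_div]
    have h2 : ∑ i, ∑ i', (if i = i' then uv i * uv i' / n else 0) = ε := by
      rw [hε, Finset.sum_div]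
      refine Finset.sum_congr rfl fun i _ => ?_
      rw [Finset.sum_ite_eq, if_pos (Finset.mem_univ i), sq]
    have hsplit : ∑ i, ∑ i',
        (uv i * uv i' / n - if i = i' then uv i * uv i' / n else 0)
        = (∑ v, f v) ^ 2 / n - ε := by
      rw [← h1, ← h2, ← Finset.sum_sub_distrib]
      exact Finset.sum_congr rfl fun i _ => Finset.sum_sub_distrib _ _
    have hfin : (∑ v, f v) ^ 2 / n ≤ 1 := by
      rw [div_le_one hn0]
      exact hsumf_sq.trans hsn.le
    rw [hsplit] at hstep
    linarith
  have hg0 : g ≠ 0 := by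
    intro h0
    rw [h0, zero_dotProduct] at hgg
    linarith
  obtain ⟨μ, w, hweig, hgw, hray⟩ := exists_eigen_dot A hA g hg0
  have hμ : μmax - 1 ≤ μ := by
    have h1 : μmax - (1 - ε) ≤ g ⬝ᵥ (A *ᵥ g) := by
      rw [hgAg]
      linarith
    rw [hgg] at hray
    nlinarith
  have hbalg : ∀ i, ∑ j, g (i, j) = 0 := by
    intro i
    have h1 : ∀ j : Fin n, g (i, j) = f (i, j) - c i := fun j => rfl
    rw [Finset.sum_congr rfl fun j _ => h1 j, Finset.sum_sub_distrib, Finset.sum_const,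
      Finset.card_univ, Fintype.card_fin, nsmul_eq_mul,
      show c i = uv i / n from rfl, show ∑ j, f (i, j) = uv i from rfl]
    field_simp
    ring
  set cw : Fin h → ℝ := fun i => (∑ j, w (i, j)) / n with hcw
  set pw : Fin h × Fin n → ℝ := fun v => cw v.1 with hpw
  set y : Fin h × Fin n → ℝ := fun v => w v - pw v with hy
  have hApw : ∀ v, (A *ᵥ pw) v = μ * pw v := by
    intro v
    have h1 : (A *ᵥ pw) v = ∑ i', if H.Adj v.1 i' then cw i' else 0 := by
      rw [hA_def, hG, hpw]
      exact mulVec_fibreConst H ω cw v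
    have h2 : ∑ i', (if H.Adj v.1 i' then cw i' else 0)
        = (∑ i', if H.Adj v.1 i' then (∑ j, w (i', j)) else 0) / n := by
      rw [Finset.sum_div]
      refine Finset.sum_congr rfl fun i' _ => ?_
      split
      · rfl
      · rw [zero_div]
    have h3 : ∑ i', (if H.Adj v.1 i' then (∑ j, w (i', j)) else 0)
        = ∑ j, (A *ᵥ w) (v.1, j) := by
      rw [hA_def, hG]
      exact (fibreSum_mulVec H ω w v.1).symm
    have h4 : ∑ j, (A *ᵥ w) (v.1, j) = μ * ∑ j, w (v.1, j) := by
      rw [hweig, Finset.mul_sum]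
      exact Finset.sum_congr rfl fun j _ => rfl
    rw [h1, h2, h3, h4, show pw v = (∑ j, w (v.1, j)) / n from rfl]
    ring
  have hAy : A *ᵥ y = μ • y := by
    funext v
    have h1 : (A *ᵥ y) v = (A *ᵥ w) v - (A *ᵥ pw) v := by
      rw [show y = w - pw from rfl, Matrix.mulVec_sub]
      rfl
    rw [h1, hweig, hApw]
    show μ * w v - μ * pw v = μ * y v
    rw [show y v = w v - pw v from rfl]
    ring
  have hbaly : ∀ i, ∑ j, y (i, j) = 0 := by
    intro i
    have h1 : ∀ j : Fin n, y (i, j) = w (i, j) - cw i := fun j => rfl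
    rw [Finset.sum_congr rfl fun j _ => h1 j, Finset.sum_sub_distrib, Finset.sum_const,
      Finset.card_univ, Fintype.card_fin, nsmul_eq_mul,
      show cw i = (∑ j, w (i, j)) / n from rfl]
    field_simp
    ring
  have hgy : g ⬝ᵥ y = g ⬝ᵥ w := by
    have h1 : g ⬝ᵥ y = g ⬝ᵥ w - g ⬝ᵥ pw := by
      rw [show y = w - pw from rfl, dotProduct_sub]
    have h2 : g ⬝ᵥ pw = 0 := by
      rw [show g ⬝ᵥ pw = ∑ v, g v * cw v.1 from rfl, Fintype.sum_prod_type]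
      refine Finset.sum_eq_zero fun i _ => ?_
      have h3 : ∀ j : Fin n, g (i, j) * cw (i, j).1 = g (i, j) * cw i := fun j => rfl
      rw [Finset.sum_congr rfl fun j _ => h3 j, ← Finset.sum_mul, hbalg i, zero_mul]
    rw [h1, h2, sub_zero]
  have hy0 : y ≠ 0 := by
    intro h0
    rw [h0, dotProduct_zero] at hgy
    exact hgw hgy.symm
  have hfinal : |μ| ≤ lambdaStar G := abs_le_lambdaStar hy0 hAy hbaly
  have habs := le_abs_self μ
  linarith


end RandomLifts
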